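/- The operator Ψ^ℓ(q) = Σ_{j=1}^L q^{j-1} (Π_{i<j} Z_i) X_j on (ℂ²)^{⊗L} satisfies (Ψ^ℓ(q))² = ((1 − q^{2L})/(1 − q²)) · Identity, for real q with q² ≠ 1. -/

import Mathlib

open Matrix

/-- Pauli X matrix. -/
noncomputable def PX : Matrix (Fin 2) (Fin 2) ℂ := !![0, 1; 1, 0]

/-- Pauli Y matrix. -/
noncomputable def PY : Matrix (Fin 2) (Fin 2) ℂ := !![0, -Complex.I; Complex.I, 0]

/-- Pauli Z matrix. -/
noncomputable def PZ : Matrix (Fin 2) (Fin 2) ℂ := !![1, 0; 0, -1]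

/-- Tensor product of one-qubit operators `f i` across a chain of `L` qubits,
as a matrix on `(ℂ²)^{⊗L}` (indexed by `Fin L → Fin 2`). -/
noncomputable def prodOp (L : ℕ) (f : Fin L → Matrix (Fin 2) (Fin 2) ℂ) :
    Matrix (Fin L → Fin 2) (Fin L → Fin 2) ℂ :=
  Matrix.of fun a b => ∏ i, f i (a i) (b i)

/-- A single-site operator `M` acting on site `j` of a chain of `L` qubits. -/
noncomputable def onSite (L : ℕ) (M : Matrix (Fin 2) (Fin 2) ℂ) (j : Fin L) :
    Matrix (Fin L → Fin 2) (Fin L → Fin 2) ℂ :=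
  prodOp L (fun i => if i = j then M else 1)


/-- The Ising strong zero mode `Ψ^ℓ(q) = Σ_j q^{j-1} (Π_{i<j} Z_i) X_j`. -/
noncomputable def isingSZM (L : ℕ) (q : ℝ) :
    Matrix (Fin L → Fin 2) (Fin L → Fin 2) ℂ :=
  ∑ j : Fin L, (q : ℂ) ^ (j : ℕ) •
    prodOp L (fun i => if i = j then PX else if i < j then PZ else 1)

lemma prodOp_mul (L : ℕ) (f g : Fin L → Matrix (Fin 2) (Fin 2) ℂ) :
    prodOp L f * prodOp L g = prodOp L (fun i => f i * g i) := by
  ext a b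
  simp only [prodOp, Matrix.mul_apply, Matrix.of_apply]
  rw [Fintype.prod_sum (fun i x => f i (a i) x * g i x (b i))]
  exact Finset.sum_congr rfl fun c _ => Finset.prod_mul_distrib.symm

lemma prodOp_one (L : ℕ) : prodOp L (fun _ => 1) = 1 := by
  ext a b
  simp only [prodOp, Matrix.of_apply, Matrix.one_apply]
  by_cases h : a = b
  · subst h; simp
  · obtain ⟨i, hi⟩ := Function.ne_iff.mp h
    rw [if_neg h]
    exact Finset.prod_eq_zero (Finset.mem_univ i) (by simp [Matrix.one_apply, hi])

lemma prodOp_negAt (L : ℕ) (f g : Fin L → Matrix (Fin 2) (Fin 2) ℂ) (j : Fin L)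
    (hj : f j = -g j) (h : ∀ i, i ≠ j → f i = g i) : prodOp L f = -prodOp L g := by
  ext a b
  simp only [prodOp, Matrix.of_apply, Matrix.neg_apply]
  rw [← Finset.prod_erase_mul _ _ (Finset.mem_univ j),
      ← Finset.prod_erase_mul _ _ (Finset.mem_univ j), hj]
  rw [Finset.prod_congr rfl (fun i hi => by rw [h i (Finset.ne_of_mem_erase hi)])]
  simp [mul_comm]

lemma PX_mul_PX : PX * PX = 1 := by
  rw [Matrix.one_fin_two]; norm_num [PX, Matrix.mul_fin_two]

lemma PZ_mul_PZ : PZ * PZ = 1 := by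
  rw [Matrix.one_fin_two]; norm_num [PZ, Matrix.mul_fin_two]

lemma PZ_mul_PX : PZ * PX = -(PX * PZ) := by
  norm_num [PZ, PX, Matrix.mul_fin_two]

/-- The site-factor of the SZM. -/
noncomputable def Fj (L : ℕ) (j : Fin L) : Fin L → Matrix (Fin 2) (Fin 2) ℂ :=
  fun i => if i = j then PX else if i < j then PZ else 1

lemma Aj_sq (L : ℕ) (j : Fin L) : prodOp L (Fj L j) * prodOp L (Fj L j) = 1 := by
  rw [prodOp_mul]
  have : (fun i => Fj L j i * Fj L j i) = fun _ => 1 := by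
    funext i
    by_cases h : i = j
    · simp [Fj, h, PX_mul_PX]
    · by_cases h2 : i < j <;> simp [Fj, h, h2, PZ_mul_PZ]
  rw [this, prodOp_one]

lemma Aj_anticomm (L : ℕ) (j k : Fin L) (hjk : j < k) :
    prodOp L (Fj L k) * prodOp L (Fj L j) = -(prodOp L (Fj L j) * prodOp L (Fj L k)) := by
  rw [prodOp_mul, prodOp_mul]
  apply prodOp_negAt L _ _ j
  · have h1 : Fj L j j = PX := by simp [Fj]
    have h2 : Fj L k j = PZ := by simp [Fj, hjk, hjk.ne]
    rw [h1, h2, PZ_mul_PX]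
  · intro i hi
    by_cases h : i < j
    · simp [Fj, h, h.trans hjk, hi, (h.trans hjk).ne, mul_comm]
    · have hij : j < i := lt_of_le_of_ne (not_lt.mp h) (Ne.symm hi)
      have : Fj L j i = 1 := by simp [Fj, hi, not_lt.mpr hij.le]
      rw [this, mul_one, one_mul]

/-- The Ising strong zero mode squares to
`((1 - q^{2L})/(1 - q²)) • 1` for `q² ≠ 1`. -/
theorem ising_szm_sq (L : ℕ) (q : ℝ) (hq : q ^ 2 ≠ 1) :
    isingSZM L q * isingSZM L q =
      ((1 - (q : ℂ) ^ (2 * L)) / (1 - (q : ℂ) ^ 2)) • 1 := by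
  set A : Fin L → Matrix (Fin L → Fin 2) (Fin L → Fin 2) ℂ :=
    fun j => prodOp L (Fj L j) with hA
  set t : Fin L → Fin L → Matrix (Fin L → Fin 2) (Fin L → Fin 2) ℂ :=
    fun j k => ((q : ℂ) ^ (j : ℕ) * (q : ℂ) ^ (k : ℕ)) • (A j * A k) with ht
  have hanti : ∀ j k : Fin L, j ≠ k → t k j = -(t j k) := by
    intro j k hjk
    rcases hjk.lt_or_gt with h | h
    · simp only [ht, hA, Aj_anticomm L j k h, smul_neg, mul_comm]
    · simp only [ht, hA, Aj_anticomm L k j h, smul_neg, mul_comm]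
      rw [neg_neg]
  have hS : isingSZM L q = ∑ j : Fin L, (q : ℂ) ^ (j : ℕ) • A j := rfl
  have expand : isingSZM L q * isingSZM L q = ∑ j, ∑ k, t j k := by
    rw [hS, Finset.sum_mul_sum]
    exact Finset.sum_congr rfl fun j _ => Finset.sum_congr rfl fun k _ => by
      rw [smul_mul_smul_comm]
  -- split off-diagonal
  have hsplit : ∀ j, (∑ k, t j k) = t j j + ∑ k, (if k = j then 0 else t j k) := by
    intro j
    have h1 : (∑ k, if k = j then t j k else 0) = t j j := by simp
    rw [← h1, ← Finset.sum_add_distrib]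
    refine Finset.sum_congr rfl fun k _ => ?_
    by_cases h : k = j <;> simp [h]
  have hR : (∑ j, ∑ k, (if k = j then (0 : Matrix (Fin L → Fin 2) (Fin L → Fin 2) ℂ) else t j k)) = 0 := by
    set R := ∑ j, ∑ k, (if k = j then (0 : Matrix (Fin L → Fin 2) (Fin L → Fin 2) ℂ) else t j k) with hRdef
    have hRR : R = -R := by
      nth_rewrite 1 [hRdef]
      rw [Finset.sum_comm, hRdef, ← Finset.sum_neg_distrib]
      refine Finset.sum_congr rfl fun k _ => ?_
      rw [← Finset.sum_neg_distrib]
      refine Finset.sum_congr rfl fun j _ => ?_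
      by_cases h : k = j
      · simp [h]
      · rw [if_neg h, if_neg (fun hh => h hh.symm), hanti k j h]
    have h2 : (2 : ℂ) • R = 0 := by
      rw [two_smul]; nth_rewrite 2 [hRR]; simp
    have := smul_eq_zero.mp h2
    simpa using this
  have hdiag : ∀ j : Fin L, t j j = ((q : ℂ) ^ 2) ^ (j : ℕ) • (1 : Matrix (Fin L → Fin 2) (Fin L → Fin 2) ℂ) := by
    intro j
    rw [ht]
    simp only [hA, Aj_sq L j]
    rw [← pow_add, ← two_mul, pow_mul]
  rw [expand]
  simp only [hsplit]
  rw [Finset.sum_add_distrib, hR, add_zero]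
  simp only [hdiag]
  rw [← Finset.sum_smul]
  congr 1
  have hq2 : (q : ℂ) ^ 2 ≠ 1 := by
    intro h; apply hq
    have : ((q ^ 2 : ℝ) : ℂ) = ((1 : ℝ) : ℂ) := by push_cast; simpa using h
    exact_mod_cast this
  rw [Fin.sum_univ_eq_sum_range (fun j => ((q:ℂ)^2)^j), geom_sum_eq hq2]
  rw [pow_mul, div_eq_div_iff (sub_ne_zero.mpr hq2) (sub_ne_zero.mpr (Ne.symm hq2))]
  ring
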